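/- Let (C_j)_{j∈J} be a finite family of nonempty closed convex subsets of H with weights ω_j > 0 summing to 1, and suppose ∩_{j∈J} C_j ≠ ∅. Then a point x satisfies Σ_{j∈J} ω_j (x − proj_{C_j} x) = 0 if and only if x ∈ ∩_{j∈J} C_j; i.e., the consistent problem and its relaxation (with K = ∅) have the same solutions. -/
import Mathlib

open RealInnerProductSpace

theorem stmt19 {H : Type*} [NormedAddCommGroup H] [InnerProductSpace ℝ H]
    {J : Type*} [Fintype J]
    (C : J → Set H)
    (hne : ∀ j, (C j).Nonempty) (hcl : ∀ j, IsClosed (C j)) (hcv : ∀ j, Convex ℝ (C j))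
    (proj : J → H → H)
    (hmem : ∀ j x, proj j x ∈ C j)
    (hbest : ∀ j x, ∀ c ∈ C j, ‖x - proj j x‖ ≤ ‖x - c‖)
    (ω : J → ℝ) (hω : ∀ j, 0 < ω j) (hsum : ∑ j, ω j = 1)
    (hint : (⋂ j, C j).Nonempty) :
    ∀ x : H, (∑ j, ω j • (x - proj j x)) = 0 ↔ x ∈ ⋂ j, C j := by
  intro x
  have hvar : ∀ j, ∀ w ∈ C j, ⟪x - proj j x, w - proj j x⟫ ≤ 0 := by
    intro j
    haveI : Nonempty (C j) := (hne j).to_subtype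
    rw [← norm_eq_iInf_iff_real_inner_le_zero (hcv j) (hmem j x)]
    refine le_antisymm (le_ciInf fun w => hbest j x w w.2) ?_
    exact ciInf_le ⟨0, Set.forall_mem_range.mpr fun w => norm_nonneg _⟩ (⟨proj j x, hmem j x⟩ : C j)
  constructor
  · intro hzero
    obtain ⟨z, hz⟩ := hint
    simp only [Set.mem_iInter] at hz ⊢
    have key : ∑ j, ω j * ‖x - proj j x‖ ^ 2 ≤ 0 := by
      have h1 : ∀ j : J, ω j * ‖x - proj j x‖ ^ 2 ≤ ω j * ⟪x - proj j x, x - z⟫ := by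
        intro j
        have h2 : ⟪x - proj j x, z - proj j x⟫ ≤ 0 := hvar j z (hz j)
        have h3 : ⟪x - proj j x, x - z⟫ = ‖x - proj j x‖ ^ 2 - ⟪x - proj j x, z - proj j x⟫ := by
          rw [← real_inner_self_eq_norm_sq, ← inner_sub_right]
          congr 1
          abel
        have := mul_le_mul_of_nonneg_left (by linarith : ‖x - proj j x‖ ^ 2 ≤ ⟪x - proj j x, x - z⟫) (hω j).le
        linarith
      calc ∑ j, ω j * ‖x - proj j x‖ ^ 2 ≤ ∑ j, ω j * ⟪x - proj j x, x - z⟫ :=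
            Finset.sum_le_sum fun j _ => h1 j
        _ = ⟪∑ j, ω j • (x - proj j x), x - z⟫ := by
            rw [sum_inner]; congr 1; ext j; rw [real_inner_smul_left]
        _ = 0 := by rw [hzero, inner_zero_left]
    intro j
    have hall : ∀ j ∈ Finset.univ, 0 ≤ ω j * ‖x - proj j x‖ ^ 2 := fun j _ =>
      mul_nonneg (hω j).le (sq_nonneg _)
    have := (Finset.sum_eq_zero_iff_of_nonneg hall).mp (le_antisymm key (Finset.sum_nonneg hall))
      j (Finset.mem_univ j)
    have hx : x - proj j x = 0 := by
      have : ‖x - proj j x‖ ^ 2 = 0 := by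
        rcases mul_eq_zero.mp this with h | h
        · exact absurd h (hω j).ne'
        · exact h
      simpa [pow_eq_zero_iff] using this
    have : x = proj j x := by rwa [sub_eq_zero] at hx
    exact this ▸ hmem j x
  · intro hx
    simp only [Set.mem_iInter] at hx
    have : ∀ j, proj j x = x := by
      intro j
      have h := hbest j x x (hx j)
      simp at h
      rw [sub_eq_zero] at h
      exact h.symm
    simp [this]
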